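/- arXiv:2105.12174 — 3 statements merged into one kernel-verified Lean document; each statement's English description precedes it below -/
import Mathlib

section
/- Let H, h > 0, and for α > 0 define K_α(x) = (1/(√(2π)·α))·exp(-x²/(2α²)). Then for any z_j, z_{j'}, η, y ∈ ℝ, ∫_ℝ K_H((y+y')/2 - (z_j+z_{j'})/2)·K_h((y-y') - (z_j-z_{j'}))·exp(-(y'-η)²/(2hH)) dy' = (1/(√(2π)(H+h/2)))·exp(-(z_{j'}-η)²/(2(H+h/2)²) - (y - z_j + (z_{j'}-η)(H-h/2)/(H+h/2))²/(2Hh)). -/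
open MeasureTheory Real

noncomputable def K (α x : ℝ) : ℝ :=
  (1 / (Real.sqrt (2 * π) * α)) * Real.exp (-x ^ 2 / (2 * α ^ 2))

theorem gaussian_kernel_identity (H h : ℝ) (hH : 0 < H) (hh : 0 < h)
    (zj zj' η y : ℝ) :
    (∫ y' : ℝ,
        K H ((y + y') / 2 - (zj + zj') / 2) * K h ((y - y') - (zj - zj')) *
          Real.exp (-(y' - η) ^ 2 / (2 * h * H))) =
      (1 / (Real.sqrt (2 * π) * (H + h / 2))) *
        Real.exp (-(zj' - η) ^ 2 / (2 * (H + h / 2) ^ 2)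
          - (y - zj + (zj' - η) * (H - h / 2) / (H + h / 2)) ^ 2 / (2 * H * h)) := by
  have hπ : (0:ℝ) < π := Real.pi_pos
  have hHh : (0:ℝ) < H + h / 2 := by linarith
  have hs : (0:ℝ) < h + 2 * H := by linarith
  set p : ℝ := (h + 2 * H) ^ 2 / (8 * H ^ 2 * h ^ 2) with hp
  have hp0 : 0 < p := by positivity
  set μ : ℝ := zj' + ((y - zj) * (4 * H ^ 2 - h ^ 2) + 4 * (η - zj') * H * h)
      / (h + 2 * H) ^ 2 with hμ
  set R : ℝ := -(zj' - η) ^ 2 / (2 * (H + h / 2) ^ 2)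
      - (y - zj + (zj' - η) * (H - h / 2) / (H + h / 2)) ^ 2 / (2 * H * h) with hR
  have h2π : Real.sqrt (2 * π) ^ 2 = 2 * π := Real.sq_sqrt (by positivity)
  have hsπ : (0:ℝ) < Real.sqrt (2 * π) := Real.sqrt_pos.mpr (by positivity)
  have key : ∀ y' : ℝ,
      K H ((y + y') / 2 - (zj + zj') / 2) * K h ((y - y') - (zj - zj')) *
        Real.exp (-(y' - η) ^ 2 / (2 * h * H)) =
      (1 / (2 * π * H * h)) * (Real.exp R * Real.exp (-p * (y' - μ) ^ 2)) := by
    intro y'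
    unfold K
    rw [← Real.exp_add]
    have hc : (1 / (2 * π * H * h)) =
        (1 / (Real.sqrt (2 * π) * H)) * (1 / (Real.sqrt (2 * π) * h)) := by
      rw [div_mul_div_comm, one_mul]
      congr 1
      linear_combination (-(H * h)) * h2π
    rw [hc]
    have he : -((y + y') / 2 - (zj + zj') / 2) ^ 2 / (2 * H ^ 2)
        + (-((y - y') - (zj - zj')) ^ 2 / (2 * h ^ 2))
        + (-(y' - η) ^ 2 / (2 * h * H)) = R + -p * (y' - μ) ^ 2 := by
      rw [hR, hp, hμ]
      field_simp
      ring
    calc (1 / (Real.sqrt (2 * π) * H)) *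
          Real.exp (-((y + y') / 2 - (zj + zj') / 2) ^ 2 / (2 * H ^ 2)) *
          ((1 / (Real.sqrt (2 * π) * h)) *
            Real.exp (-((y - y') - (zj - zj')) ^ 2 / (2 * h ^ 2))) *
          Real.exp (-(y' - η) ^ 2 / (2 * h * H))
        = (1 / (Real.sqrt (2 * π) * H)) * (1 / (Real.sqrt (2 * π) * h)) *
          Real.exp (-((y + y') / 2 - (zj + zj') / 2) ^ 2 / (2 * H ^ 2)
            + (-((y - y') - (zj - zj')) ^ 2 / (2 * h ^ 2))
            + (-(y' - η) ^ 2 / (2 * h * H))) := by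
          rw [Real.exp_add, Real.exp_add]; ring
      _ = _ := by rw [he, Real.exp_add]
  rw [MeasureTheory.integral_congr_ae (Filter.Eventually.of_forall key)]
  rw [MeasureTheory.integral_const_mul]
  rw [MeasureTheory.integral_const_mul]
  have hshift : (∫ y' : ℝ, Real.exp (-p * (y' - μ) ^ 2)) =
      ∫ x : ℝ, Real.exp (-p * x ^ 2) :=
    MeasureTheory.integral_sub_right_eq_self (fun x => Real.exp (-p * x ^ 2)) μ
  rw [hshift, integral_gaussian]
  have hsq : π / p = (2 * Real.sqrt (2 * π) * H * h / (h + 2 * H)) ^ 2 := by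
    have h8 : (2 * Real.sqrt (2 * π) * H * h) ^ 2 = 8 * π * H ^ 2 * h ^ 2 := by
      linear_combination (4 * H ^ 2 * h ^ 2) * h2π
    rw [hp, div_pow, h8, div_div_eq_mul_div]
    ring
  rw [hsq, Real.sqrt_sq (by positivity)]
  have hconst : (1:ℝ) / (2 * π * H * h) * (2 * Real.sqrt (2 * π) * H * h / (h + 2 * H))
      = 1 / (Real.sqrt (2 * π) * (H + h / 2)) := by
    rw [div_mul_div_comm, div_eq_div_iff (by positivity) (by positivity)]
    linear_combination (2 * H * h * (H + h / 2)) * h2π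
  calc (1:ℝ) / (2 * π * H * h) * (Real.exp R * (2 * Real.sqrt (2 * π) * H * h / (h + 2 * H)))
      = ((1:ℝ) / (2 * π * H * h) * (2 * Real.sqrt (2 * π) * H * h / (h + 2 * H))) * Real.exp R := by
        ring
    _ = _ := by rw [hconst]
end

section
/- Let H, h > 0 with notation K_α(x) = (1/(√(2π)α))·exp(-x²/(2α²)), and let He_n denote the probabilists' Hermite polynomial of degree n. Then for any z_j, z_{j'}, η, y ∈ ℝ and n ≥ 0, ∫_ℝ K_H((y+y')/2 - (z_j+z_{j'})/2)·K_h((y-y') - (z_j-z_{j'}))·exp(-(y'-η)²/(2hH))·He_n((y'-η)/√(Hh)) dy' = ((H²+h²/4)^{n/2}/(√(2π)(H+h/2)^{n+1}))·exp(-(z_{j'}-η)²/(2(H+h/2)²) - (y-z_j + (z_{j'}-η)(H-h/2)/(H+h/2))²/(2Hh))·He_n((y-z_j)(H-h/2)/√(Hh(H²+h²/4)) + (z_{j'}-η)√(H²+h²/4)/(√(Hh)(H+h/2))). -/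
open MeasureTheory Real Polynomial

/-- Probabilists' Hermite polynomial evaluated at a real number. -/
noncomputable def He (n : ℕ) (ξ : ℝ) : ℝ := Polynomial.aeval ξ (Polynomial.hermite n)

/-! ### Auxiliary polynomial lemmas -/

lemma hermite_deriv : ∀ n : ℕ,
    derivative (Polynomial.hermite (n + 1)) = C ((n : ℤ) + 1) * Polynomial.hermite n := by
  intro n
  induction n using Nat.twoStepInduction with
  | zero => simp [Polynomial.hermite_one, Polynomial.hermite_zero]
  | one =>
      rw [Polynomial.hermite_succ, Polynomial.hermite_one]
      simp [Polynomial.hermite_one]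
      ring
  | more n ih1 ih2 =>
      have ih1' : derivative (Polynomial.hermite (n + 1)) = C ((n : ℤ) + 1) * Polynomial.hermite n := ih1
      have ih2' : derivative (Polynomial.hermite (n + 2)) = C (((n : ℤ) + 1) + 1) * Polynomial.hermite (n + 1) := by
        push_cast at ih2
        exact ih2
      have hs2' : Polynomial.hermite (n + 2)
          = X * Polynomial.hermite (n + 1) - C ((n : ℤ) + 1) * Polynomial.hermite n := by
        have := Polynomial.hermite_succ (n + 1)
        rw [ih1'] at this
        exact this
      rw [Polynomial.hermite_succ (n + 2), derivative_sub, derivative_mul, derivative_X,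
        one_mul, ih2', derivative_mul, derivative_C, zero_mul, zero_add, ih1', hs2']
      push_cast
      simp only [map_add, map_one, map_ofNat]
      ring

lemma He_zero (x : ℝ) : He 0 x = 1 := by simp [He]

lemma He_one (x : ℝ) : He 1 x = x := by simp [He, Polynomial.hermite_one]

lemma He_succ_succ (n : ℕ) (x : ℝ) :
    He (n + 2) x = x * He (n + 1) x - ((n : ℝ) + 1) * He n x := by
  rw [He, Polynomial.hermite_succ (n + 1), map_sub, map_mul, aeval_X, hermite_deriv n,
    map_mul, aeval_C]
  push_cast
  rw [He, He]

/-- The polynomial whose evaluation at `x` is `He n (c*x+d)`. -/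
noncomputable def HeP (n : ℕ) (c d : ℝ) : Polynomial ℝ :=
  ((Polynomial.hermite n).map (Int.castRingHom ℝ)).comp (C c * X + C d)

lemma eval_HeP (n : ℕ) (c d x : ℝ) : Polynomial.eval x (HeP n c d) = He n (c * x + d) := by
  simp [HeP, Polynomial.eval_comp, He, Polynomial.aeval_def, Polynomial.eval_map]

/-! ### Derivatives -/

lemma hasDerivAt_He (n : ℕ) (c d x : ℝ) :
    HasDerivAt (fun x : ℝ => He (n + 1) (c * x + d))
      (c * (((n : ℝ) + 1) * He n (c * x + d))) x := by
  have h1 : HasDerivAt (fun t : ℝ => c * t + d) c x := by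
    simpa using ((hasDerivAt_id x).const_mul c).add_const d
  have h2 := Polynomial.hasDerivAt_aeval (q := Polynomial.hermite (n + 1)) (c * x + d)
  have h3 := HasDerivAt.comp x h2 h1
  have h4 : (aeval (c * x + d) (derivative (Polynomial.hermite (n + 1))) : ℝ)
      = ((n : ℝ) + 1) * He n (c * x + d) := by
    rw [hermite_deriv n, map_mul, aeval_C]
    push_cast
    rw [He]
  have h5 : (aeval (c * x + d) (derivative (Polynomial.hermite (n + 1))) : ℝ) * c
      = c * (((n : ℝ) + 1) * He n (c * x + d)) := by rw [h4]; ring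
  rw [← h5]
  exact h3

lemma hasDerivAt_gauss (s m x : ℝ) :
    HasDerivAt (fun x : ℝ => Real.exp (-(x - m) ^ 2 / (2 * s ^ 2)))
      (Real.exp (-(x - m) ^ 2 / (2 * s ^ 2)) * (-(x - m) / s ^ 2)) x := by
  have h0 : HasDerivAt (fun x : ℝ => x - m) 1 x := (hasDerivAt_id x).sub_const m
  have h1 : HasDerivAt (fun x : ℝ => -(x - m) ^ 2 / (2 * s ^ 2)) (-(x - m) / s ^ 2) x := by
    have h2 := ((h0.fun_pow 2).fun_neg).div_const (2 * s ^ 2)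
    refine h2.congr_deriv ?_
    rcases eq_or_ne s 0 with hs | hs
    · simp [hs]
    · field_simp
      ring
  simpa [mul_comm] using h1.exp

/-! ### Integrability and decay -/

lemma integrable_pow_gauss {b : ℝ} (hb : 0 < b) (k : ℕ) :
    Integrable fun x : ℝ => x ^ k * Real.exp (-b * x ^ 2) := by
  have h := integrable_rpow_mul_exp_neg_mul_sq hb (s := (k : ℝ))
    (by exact_mod_cast neg_one_lt_zero.trans_le (Nat.cast_nonneg k))
  simpa [Real.rpow_natCast] using h

lemma integrable_poly_gauss {b : ℝ} (hb : 0 < b) (q : Polynomial ℝ) :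
    Integrable fun x : ℝ => Polynomial.eval x q * Real.exp (-b * x ^ 2) := by
  induction q using Polynomial.induction_on' with
  | add p q hp hq => simpa [add_mul] using hp.fun_add hq
  | monomial k a =>
      simpa [Polynomial.eval_monomial, mul_assoc] using (integrable_pow_gauss hb k).const_mul a

lemma integrable_gauss_poly {s : ℝ} (hs : 0 < s) (m : ℝ) (q : Polynomial ℝ) :
    Integrable fun x : ℝ => Real.exp (-(x - m) ^ 2 / (2 * s ^ 2)) * Polynomial.eval x q := by
  have hb : 0 < 1 / (2 * s ^ 2) := by positivity
  have h := (integrable_poly_gauss hb (q.comp (X + C m))).comp_sub_right m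
  refine h.congr ?_
  filter_upwards with x
  rw [Polynomial.eval_comp]
  simp only [Polynomial.eval_add, Polynomial.eval_X, Polynomial.eval_C]
  rw [sub_add_cancel, show -(1 / (2 * s ^ 2)) * (x - m) ^ 2 = -(x - m) ^ 2 / (2 * s ^ 2) by ring,
    mul_comm]

lemma abs_eval_le (q : Polynomial ℝ) (x : ℝ) (hx : 0 ≤ x) :
    |Polynomial.eval x q| ≤
      Polynomial.eval x (∑ i ∈ Finset.range (q.natDegree + 1), C |q.coeff i| * X ^ i) := by
  rw [Polynomial.eval_eq_sum_range]
  simp only [Polynomial.eval_finset_sum, Polynomial.eval_mul, Polynomial.eval_C,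
    Polynomial.eval_pow, Polynomial.eval_X]
  refine (Finset.abs_sum_le_sum_abs _ _).trans ?_
  refine Finset.sum_le_sum fun i _ => ?_
  rw [abs_mul, abs_pow, abs_of_nonneg hx]

lemma tendsto_poly_gauss_atTop {b : ℝ} (hb : 0 < b) (q : Polynomial ℝ) :
    Filter.Tendsto (fun x : ℝ => Polynomial.eval x q * Real.exp (-b * x ^ 2))
      Filter.atTop (nhds 0) := by
  set Q : Polynomial ℝ := ∑ i ∈ Finset.range (q.natDegree + 1), C |q.coeff i| * X ^ i with hQ
  have hten : Filter.Tendsto (fun x : ℝ => Polynomial.eval x Q * Real.exp (-x))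
      Filter.atTop (nhds 0) := by
    have := Q.tendsto_div_exp_atTop
    refine this.congr fun x => ?_
    rw [Real.exp_neg, div_eq_mul_inv]
  refine squeeze_zero_norm' ?_ hten
  filter_upwards [Filter.eventually_ge_atTop (max 1 (1 / b))] with x hx
  have hx1 : (1 : ℝ) ≤ x := le_trans (le_max_left _ _) hx
  have hx0 : 0 ≤ x := by linarith
  have hxb : 1 / b ≤ x := le_trans (le_max_right _ _) hx
  have hbx : x ≤ b * x ^ 2 := by
    have h1 : 1 ≤ b * x := by
      rw [div_le_iff₀ hb] at hxb
      linarith [hxb]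
    nlinarith
  have hexp : Real.exp (-b * x ^ 2) ≤ Real.exp (-x) := by
    apply Real.exp_le_exp.2
    linarith
  rw [norm_mul, Real.norm_eq_abs, Real.norm_eq_abs, Real.abs_exp]
  calc |Polynomial.eval x q| * Real.exp (-b * x ^ 2)
      ≤ Polynomial.eval x Q * Real.exp (-x) := by
        apply mul_le_mul (abs_eval_le q x hx0) hexp (Real.exp_pos _).le
        exact (abs_nonneg _).trans (abs_eval_le q x hx0)

lemma tendsto_poly_gauss_atBot {b : ℝ} (hb : 0 < b) (q : Polynomial ℝ) :
    Filter.Tendsto (fun x : ℝ => Polynomial.eval x q * Real.exp (-b * x ^ 2))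
      Filter.atBot (nhds 0) := by
  have h := (tendsto_poly_gauss_atTop hb (q.comp (-X))).comp Filter.tendsto_neg_atBot_atTop
  refine h.congr fun x => ?_
  simp [Polynomial.eval_comp]

lemma tendsto_gauss_poly_atTop {s : ℝ} (hs : 0 < s) (m : ℝ) (q : Polynomial ℝ) :
    Filter.Tendsto (fun x : ℝ => Real.exp (-(x - m) ^ 2 / (2 * s ^ 2)) * Polynomial.eval x q)
      Filter.atTop (nhds 0) := by
  have hb : 0 < 1 / (2 * s ^ 2) := by positivity
  have h := (tendsto_poly_gauss_atTop hb (q.comp (X + C m))).comp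
    (Filter.tendsto_atTop_add_const_right Filter.atTop (-m) Filter.tendsto_id)
  refine h.congr fun x => ?_
  simp only [Function.comp_apply, Filter.tendsto_id, Polynomial.eval_comp, Polynomial.eval_add,
    Polynomial.eval_X, Polynomial.eval_C, id_eq]
  rw [show x + -m + m = x by ring, mul_comm,
    show -(1 / (2 * s ^ 2)) * (x + -m) ^ 2 = -(x - m) ^ 2 / (2 * s ^ 2) by ring]

lemma tendsto_gauss_poly_atBot {s : ℝ} (hs : 0 < s) (m : ℝ) (q : Polynomial ℝ) :
    Filter.Tendsto (fun x : ℝ => Real.exp (-(x - m) ^ 2 / (2 * s ^ 2)) * Polynomial.eval x q)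
      Filter.atBot (nhds 0) := by
  have hb : 0 < 1 / (2 * s ^ 2) := by positivity
  have h := (tendsto_poly_gauss_atBot hb (q.comp (X + C m))).comp
    (Filter.tendsto_atBot_add_const_right Filter.atBot (-m) Filter.tendsto_id)
  refine h.congr fun x => ?_
  simp only [Function.comp_apply, Polynomial.eval_comp, Polynomial.eval_add,
    Polynomial.eval_X, Polynomial.eval_C, id_eq]
  rw [show x + -m + m = x by ring, mul_comm,
    show -(1 / (2 * s ^ 2)) * (x + -m) ^ 2 = -(x - m) ^ 2 / (2 * s ^ 2) by ring]

/-! ### whole-line FTC -/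

lemma integral_deriv_zero {f f' : ℝ → ℝ} (hd : ∀ x, HasDerivAt f (f' x) x)
    (hi : Integrable f') (ht : Filter.Tendsto f Filter.atTop (nhds 0))
    (hb : Filter.Tendsto f Filter.atBot (nhds 0)) : ∫ x : ℝ, f' x = 0 := by
  have h1 : ∫ x in Set.Ioi (0 : ℝ), f' x = 0 - f 0 :=
    integral_Ioi_of_hasDerivAt_of_tendsto (hd 0).continuousAt.continuousWithinAt
      (fun x _ => hd x) hi.integrableOn ht
  have h2 : ∫ x in Set.Iic (0 : ℝ), f' x = f 0 - 0 :=
    integral_Iic_of_hasDerivAt_of_tendsto (hd 0).continuousAt.continuousWithinAt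
      (fun x _ => hd x) hi.integrableOn hb
  rw [← intervalIntegral.integral_Iic_add_Ioi (b := (0 : ℝ)) hi.integrableOn hi.integrableOn, h1, h2]
  ring

/-! ### The key integration by parts -/

lemma gauss_0 {s : ℝ} (hs : 0 < s) (m : ℝ) :
    ∫ x : ℝ, Real.exp (-(x - m) ^ 2 / (2 * s ^ 2)) = Real.sqrt (2 * π) * s := by
  have h1 : (fun x : ℝ => Real.exp (-(x - m) ^ 2 / (2 * s ^ 2)))
      = fun x : ℝ => (fun y : ℝ => Real.exp (-(1 / (2 * s ^ 2)) * y ^ 2)) (x - m) := by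
    funext x
    exact congrArg Real.exp (by ring)
  rw [h1, integral_sub_right_eq_self (fun y : ℝ => Real.exp (-(1 / (2 * s ^ 2)) * y ^ 2)) m,
    integral_gaussian]
  rw [show π / (1 / (2 * s ^ 2)) = 2 * π * s ^ 2 by field_simp,
    show 2 * π * s ^ 2 = (2 * π) * s ^ 2 by ring, Real.sqrt_mul (by positivity),
    Real.sqrt_sq hs.le]

lemma ibp0 {s : ℝ} (hs : 0 < s) (m : ℝ) :
    ∫ x : ℝ, Real.exp (-(x - m) ^ 2 / (2 * s ^ 2)) * (x - m) = 0 := by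
  have hd : ∀ x : ℝ, HasDerivAt (fun x : ℝ => Real.exp (-(x - m) ^ 2 / (2 * s ^ 2)))
      ((-1 / s ^ 2) * (Real.exp (-(x - m) ^ 2 / (2 * s ^ 2)) * (x - m))) x := by
    intro x
    have := hasDerivAt_gauss s m x
    convert this using 1
    ring
  have hint : Integrable fun x : ℝ =>
      (-1 / s ^ 2) * (Real.exp (-(x - m) ^ 2 / (2 * s ^ 2)) * (x - m)) := by
    have := (integrable_gauss_poly hs m (X - C m)).const_mul (-1 / s ^ 2)
    refine this.congr ?_
    filter_upwards with x
    simp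
  have ht := tendsto_gauss_poly_atTop hs m 1
  have hb := tendsto_gauss_poly_atBot hs m 1
  simp only [Polynomial.eval_one, mul_one] at ht hb
  have h0 := integral_deriv_zero hd hint ht hb
  rw [integral_const_mul] at h0
  have hne : (-1 : ℝ) / s ^ 2 ≠ 0 :=
    div_ne_zero (by norm_num) (by positivity)
  exact (mul_eq_zero.1 h0).resolve_left hne

lemma ibp {s : ℝ} (hs : 0 < s) (m c d : ℝ) (n : ℕ) :
    ∫ x : ℝ, Real.exp (-(x - m) ^ 2 / (2 * s ^ 2)) * ((x - m) * He (n + 1) (c * x + d))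
      = c * s ^ 2 * ((n : ℝ) + 1) *
        ∫ x : ℝ, Real.exp (-(x - m) ^ 2 / (2 * s ^ 2)) * He n (c * x + d) := by
  set g1 : ℝ → ℝ := fun x => Real.exp (-(x - m) ^ 2 / (2 * s ^ 2)) * ((x - m) * He (n + 1) (c * x + d))
  set g2 : ℝ → ℝ := fun x => Real.exp (-(x - m) ^ 2 / (2 * s ^ 2)) * He n (c * x + d)
  have hg1 : Integrable g1 := by
    have := integrable_gauss_poly hs m ((X - C m) * HeP (n + 1) c d)
    refine this.congr ?_
    filter_upwards with x
    simp [g1, eval_HeP, mul_assoc]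
  have hg2 : Integrable g2 := by
    have := integrable_gauss_poly hs m (HeP n c d)
    refine this.congr ?_
    filter_upwards with x
    simp [g2, eval_HeP]
  have hd : ∀ x : ℝ, HasDerivAt
      (fun x : ℝ => Real.exp (-(x - m) ^ 2 / (2 * s ^ 2)) * He (n + 1) (c * x + d))
      ((-1 / s ^ 2) * g1 x + (c * ((n : ℝ) + 1)) * g2 x) x := by
    intro x
    have h := (hasDerivAt_gauss s m x).fun_mul (hasDerivAt_He n c d x)
    refine h.congr_deriv ?_
    simp only [g1, g2]
    ring
  have hint : Integrable fun x : ℝ => (-1 / s ^ 2) * g1 x + (c * ((n : ℝ) + 1)) * g2 x :=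
    (hg1.const_mul _).add (hg2.const_mul _)
  have ht : Filter.Tendsto
      (fun x : ℝ => Real.exp (-(x - m) ^ 2 / (2 * s ^ 2)) * He (n + 1) (c * x + d))
      Filter.atTop (nhds 0) := by
    have := tendsto_gauss_poly_atTop hs m (HeP (n + 1) c d)
    refine this.congr fun x => by rw [eval_HeP]
  have hb : Filter.Tendsto
      (fun x : ℝ => Real.exp (-(x - m) ^ 2 / (2 * s ^ 2)) * He (n + 1) (c * x + d))
      Filter.atBot (nhds 0) := by
    have := tendsto_gauss_poly_atBot hs m (HeP (n + 1) c d)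
    refine this.congr fun x => by rw [eval_HeP]
  have h0 := integral_deriv_zero hd hint ht hb
  rw [integral_add (hg1.const_mul _) (hg2.const_mul _), integral_const_mul,
    integral_const_mul] at h0
  have hs2 : (s : ℝ) ^ 2 ≠ 0 := by positivity
  have : ∫ x, g1 x = c * s ^ 2 * ((n : ℝ) + 1) * ∫ x, g2 x := by
    have h1 : (-1 / s ^ 2) * ∫ x, g1 x = -(c * ((n : ℝ) + 1) * ∫ x, g2 x) := by linarith
    field_simp at h1
    linarith
  exact this

/-! ### The core Gaussian–Hermite integral -/

lemma core {s : ℝ} (hs : 0 < s) (m c d : ℝ) (hcs : c ^ 2 * s ^ 2 < 1) : ∀ n : ℕ,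
    ∫ x : ℝ, Real.exp (-(x - m) ^ 2 / (2 * s ^ 2)) * He n (c * x + d)
      = Real.sqrt (2 * π) * s * (Real.sqrt (1 - c ^ 2 * s ^ 2)) ^ n *
        He n ((c * m + d) / Real.sqrt (1 - c ^ 2 * s ^ 2)) := by
  have hσpos : 0 < 1 - c ^ 2 * s ^ 2 := by linarith
  set σ : ℝ := Real.sqrt (1 - c ^ 2 * s ^ 2) with hσ
  have hσ0 : 0 < σ := Real.sqrt_pos.2 hσpos
  have hσsq : σ ^ 2 = 1 - c ^ 2 * s ^ 2 := Real.sq_sqrt hσpos.le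
  intro n
  induction n using Nat.twoStepInduction with
  | zero => simpa [He_zero] using gauss_0 hs m
  | one =>
      have hsplit : (fun x : ℝ => Real.exp (-(x - m) ^ 2 / (2 * s ^ 2)) * He 1 (c * x + d))
          = fun x : ℝ => c * (Real.exp (-(x - m) ^ 2 / (2 * s ^ 2)) * (x - m))
            + (c * m + d) * Real.exp (-(x - m) ^ 2 / (2 * s ^ 2)) := by
        funext x
        rw [He_one]
        ring
      rw [hsplit, integral_add, integral_const_mul, integral_const_mul, ibp0 hs m, gauss_0 hs m,
        He_one, pow_one, mul_zero, zero_add]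
      · field_simp
      · have := (integrable_gauss_poly hs m (X - C m)).const_mul c
        refine this.congr ?_
        filter_upwards with x
        simp
      · have := (integrable_gauss_poly hs m 1).const_mul (c * m + d)
        refine this.congr ?_
        filter_upwards with x
        simp
  | more n ih1 ih2 =>
      have hrw : (fun x : ℝ => Real.exp (-(x - m) ^ 2 / (2 * s ^ 2)) * He (n + 2) (c * x + d))
          = fun x : ℝ =>
            c * (Real.exp (-(x - m) ^ 2 / (2 * s ^ 2)) * ((x - m) * He (n + 1) (c * x + d)))
            + ((c * m + d) * (Real.exp (-(x - m) ^ 2 / (2 * s ^ 2)) * He (n + 1) (c * x + d))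
              - ((n : ℝ) + 1) * (Real.exp (-(x - m) ^ 2 / (2 * s ^ 2)) * He n (c * x + d))) := by
        funext x
        rw [He_succ_succ]
        ring
      have hint1 : Integrable fun x : ℝ =>
          Real.exp (-(x - m) ^ 2 / (2 * s ^ 2)) * ((x - m) * He (n + 1) (c * x + d)) := by
        have := integrable_gauss_poly hs m ((X - C m) * HeP (n + 1) c d)
        refine this.congr ?_
        filter_upwards with x
        simp [eval_HeP, mul_assoc]
      have hint2 : Integrable fun x : ℝ =>
          Real.exp (-(x - m) ^ 2 / (2 * s ^ 2)) * He (n + 1) (c * x + d) := by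
        have := integrable_gauss_poly hs m (HeP (n + 1) c d)
        refine this.congr ?_
        filter_upwards with x
        simp [eval_HeP]
      have hint3 : Integrable fun x : ℝ =>
          Real.exp (-(x - m) ^ 2 / (2 * s ^ 2)) * He n (c * x + d) := by
        have := integrable_gauss_poly hs m (HeP n c d)
        refine this.congr ?_
        filter_upwards with x
        simp [eval_HeP]
      have h23 : Integrable (fun x : ℝ =>
          (c * m + d) * (Real.exp (-(x - m) ^ 2 / (2 * s ^ 2)) * He (n + 1) (c * x + d))
            - ((n : ℝ) + 1) * (Real.exp (-(x - m) ^ 2 / (2 * s ^ 2)) * He n (c * x + d))) :=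
        (hint2.const_mul _).sub (hint3.const_mul _)
      rw [hrw, integral_add (hint1.const_mul c) h23,
        integral_sub (hint2.const_mul _) (hint3.const_mul _), integral_const_mul,
        integral_const_mul, integral_const_mul, ibp hs m c d n, ih1, ih2]
      have harg : σ * ((c * m + d) / σ) = c * m + d := by field_simp
      rw [He_succ_succ n ((c * m + d) / σ)]
      rw [pow_succ σ (n + 1), pow_succ σ n]
      linear_combination (((n : ℝ) + 1) * (Real.sqrt (2 * π) * s * σ ^ n)
          * He n ((c * m + d) / σ)) * hσsq
        - ((Real.sqrt (2 * π) * s * σ ^ n * σ) * He (n + 1) ((c * m + d) / σ)) * harg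

lemma combine_exp (p1 p2 q1 q2 q3 w : ℝ) :
    (p1 * Real.exp q1) * (p2 * Real.exp q2) * Real.exp q3 * w
      = (p1 * p2) * Real.exp (q1 + q2 + q3) * w := by
  rw [Real.exp_add, Real.exp_add]
  ring

set_option maxHeartbeats 4000000 in
theorem hermite_integral_identity (H h : ℝ) (hH : 0 < H) (hh : 0 < h)
    (zj zj' η y : ℝ) (n : ℕ) :
    (∫ y' : ℝ,
        K H ((y + y') / 2 - (zj + zj') / 2) * K h ((y - y') - (zj - zj')) *
          Real.exp (-(y' - η) ^ 2 / (2 * h * H)) *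
          He n ((y' - η) / Real.sqrt (H * h))) =
      ((Real.sqrt (H ^ 2 + h ^ 2 / 4)) ^ n / (Real.sqrt (2 * π) * (H + h / 2) ^ (n + 1))) *
        Real.exp (-(zj' - η) ^ 2 / (2 * (H + h / 2) ^ 2)
          - (y - zj + (zj' - η) * (H - h / 2) / (H + h / 2)) ^ 2 / (2 * H * h)) *
        He n ((y - zj) * (H - h / 2) / Real.sqrt (H * h * (H ^ 2 + h ^ 2 / 4))
          + (zj' - η) * Real.sqrt (H ^ 2 + h ^ 2 / 4) / (Real.sqrt (H * h) * (H + h / 2))) := by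
  have hpi : (0 : ℝ) < π := Real.pi_pos
  have hS0 : 0 < Real.sqrt (H * h) := Real.sqrt_pos.2 (by positivity)
  have hT0 : 0 < Real.sqrt (H ^ 2 + h ^ 2 / 4) := Real.sqrt_pos.2 (by positivity)
  have hP0 : 0 < Real.sqrt (2 * π) := Real.sqrt_pos.2 (by positivity)
  have hS2 : Real.sqrt (H * h) ^ 2 = H * h := Real.sq_sqrt (by positivity)
  have hT2 : Real.sqrt (H ^ 2 + h ^ 2 / 4) ^ 2 = H ^ 2 + h ^ 2 / 4 :=
    Real.sq_sqrt (by positivity)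
  have hP2 : Real.sqrt (2 * π) ^ 2 = 2 * π := Real.sq_sqrt (by positivity)
  have hW : 0 < H + h / 2 := by linarith
  set s : ℝ := H * h / (H + h / 2) with hsdef
  have hs : 0 < s := by positivity
  set m : ℝ := zj' + s ^ 2 *
      (-(y - zj) / (4 * H ^ 2) + (y - zj) / h ^ 2 - (zj' - η) / (H * h)) with hmdef
  set c : ℝ := 1 / Real.sqrt (H * h) with hcdef
  set d : ℝ := -η / Real.sqrt (H * h) with hddef
  have hc2s2 : c ^ 2 * s ^ 2 = H * h / (H + h / 2) ^ 2 := by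
    rw [hcdef, div_pow, one_pow, hS2, hsdef, div_pow]
    field_simp
  have hcs : c ^ 2 * s ^ 2 < 1 := by
    rw [hc2s2, div_lt_one (by positivity)]
    nlinarith [sq_nonneg (H - h / 2), sq_nonneg H, sq_nonneg h]
  have hsig : Real.sqrt (1 - c ^ 2 * s ^ 2) = Real.sqrt (H ^ 2 + h ^ 2 / 4) / (H + h / 2) := by
    rw [show 1 - c ^ 2 * s ^ 2 = (Real.sqrt (H ^ 2 + h ^ 2 / 4) / (H + h / 2)) ^ 2 by
      rw [hc2s2, div_pow, hT2]; field_simp; ring]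
    exact Real.sqrt_sq (by positivity)
  have hST : Real.sqrt (H * h * (H ^ 2 + h ^ 2 / 4))
      = Real.sqrt (H * h) * Real.sqrt (H ^ 2 + h ^ 2 / 4) :=
    Real.sqrt_mul (by positivity) _
  have hsc : 1 / (Real.sqrt (2 * π) * H) * (1 / (Real.sqrt (2 * π) * h))
      = 1 / (2 * π * H * h) := by
    rw [div_mul_div_comm, one_mul]
    congr 1
    linear_combination (H * h) * hP2
  have hexpEq : ∀ y' : ℝ,
      -((y + y') / 2 - (zj + zj') / 2) ^ 2 / (2 * H ^ 2)
        + -((y - y') - (zj - zj')) ^ 2 / (2 * h ^ 2)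
        + -(y' - η) ^ 2 / (2 * h * H)
      = -(y' - m) ^ 2 / (2 * s ^ 2)
        + (-(zj' - η) ^ 2 / (2 * (H + h / 2) ^ 2)
          - (y - zj + (zj' - η) * (H - h / 2) / (H + h / 2)) ^ 2 / (2 * H * h)) := by
    intro y'
    rw [hmdef, hsdef]
    field_simp
    ring
  have hpt : ∀ y' : ℝ,
      K H ((y + y') / 2 - (zj + zj') / 2) * K h ((y - y') - (zj - zj')) *
        Real.exp (-(y' - η) ^ 2 / (2 * h * H)) * He n ((y' - η) / Real.sqrt (H * h))
      = (1 / (2 * π * H * h) * Real.exp (-(zj' - η) ^ 2 / (2 * (H + h / 2) ^ 2)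
          - (y - zj + (zj' - η) * (H - h / 2) / (H + h / 2)) ^ 2 / (2 * H * h)))
        * (Real.exp (-(y' - m) ^ 2 / (2 * s ^ 2)) * He n (c * y' + d)) := by
    intro y'
    have harg : (y' - η) / Real.sqrt (H * h) = c * y' + d := by
      rw [hcdef, hddef]
      field_simp
      ring
    rw [harg, K, K, combine_exp, hsc, hexpEq y', Real.exp_add]
    ring
  rw [show (∫ y' : ℝ,
        K H ((y + y') / 2 - (zj + zj') / 2) * K h ((y - y') - (zj - zj')) *
          Real.exp (-(y' - η) ^ 2 / (2 * h * H)) *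
          He n ((y' - η) / Real.sqrt (H * h)))
      = ∫ y' : ℝ, (1 / (2 * π * H * h) * Real.exp (-(zj' - η) ^ 2 / (2 * (H + h / 2) ^ 2)
          - (y - zj + (zj' - η) * (H - h / 2) / (H + h / 2)) ^ 2 / (2 * H * h)))
        * (Real.exp (-(y' - m) ^ 2 / (2 * s ^ 2)) * He n (c * y' + d)) from
      integral_congr_ae (Filter.Eventually.of_forall hpt),
    integral_const_mul, core hs m c d hcs n, hsig, hST]
  have hkey : (m - η) * (H + h / 2) ^ 2
      = (y - zj) * (H - h / 2) * (H + h / 2) + (zj' - η) * (H ^ 2 + h ^ 2 / 4) := by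
    rw [hmdef, hsdef]
    field_simp
    ring
  have hargHe0 : ∀ S T : ℝ, S ≠ 0 → T ≠ 0 → T ^ 2 = H ^ 2 + h ^ 2 / 4 →
      ((1 / S) * m + -η / S) / (T / (H + h / 2))
        = (y - zj) * (H - h / 2) / (S * T) + (zj' - η) * T / (S * (H + h / 2)) := by
    intro S T hS' hT' hT2'
    have e1 : ((1 / S) * m + -η / S) / (T / (H + h / 2))
        = ((m - η) * (H + h / 2) ^ 2) / (S * T * (H + h / 2)) := by
      field_simp
      ring
    have e2 : (y - zj) * (H - h / 2) / (S * T) + (zj' - η) * T / (S * (H + h / 2))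
        = ((y - zj) * (H - h / 2) * (H + h / 2) + (zj' - η) * T ^ 2)
          / (S * T * (H + h / 2)) := by
      field_simp
    rw [e1, e2, hT2', ← hkey]
  have hargHe := hargHe0 (Real.sqrt (H * h)) (Real.sqrt (H ^ 2 + h ^ 2 / 4))
    hS0.ne' hT0.ne' hT2
  rw [hcdef, hddef, hargHe]
  have hscal : 1 / (2 * π * H * h)
      * (Real.sqrt (2 * π) * s * (Real.sqrt (H ^ 2 + h ^ 2 / 4) / (H + h / 2)) ^ n)
      = Real.sqrt (H ^ 2 + h ^ 2 / 4) ^ n / (Real.sqrt (2 * π) * (H + h / 2) ^ (n + 1)) := by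
    rw [div_pow, hsdef, pow_succ]
    rw [show 2 * π = Real.sqrt (2 * π) ^ 2 from hP2.symm]
    field_simp
    rw [Real.sqrt_sq (Real.sqrt_nonneg _)]
    ring
  linear_combination (Real.exp (-(zj' - η) ^ 2 / (2 * (H + h / 2) ^ 2)
      - (y - zj + (zj' - η) * (H - h / 2) / (H + h / 2)) ^ 2 / (2 * H * h))
    * He n ((y - zj) * (H - h / 2)
        / (Real.sqrt (H * h) * Real.sqrt (H ^ 2 + h ^ 2 / 4))
      + (zj' - η) * Real.sqrt (H ^ 2 + h ^ 2 / 4)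
        / (Real.sqrt (H * h) * (H + h / 2)))) * hscal
end

section
/- Let H > h/2 > 0, C > 0, ρ ∈ ℝ \ {0}, z ∈ ℝ, and define the kernel 𝕂(y,y') = C·ρ²·K_H(z - (y+y')/2)·K_h(y'-y), where K_α(x) = (1/(√(2π)α))·exp(-x²/(2α²)). Then the function V_0(y) = exp(-(y-z)²/(2Hh)) is an eigenfunction of the integral operator φ ↦ ∫_ℝ 𝕂(·,y')φ(y') dy' on L²(ℝ), with eigenvalue Λ_0 = Cρ²/(√(2π)(H+h/2)). -/
open MeasureTheory Real

theorem leading_eigenfunction (H h C ρ z : ℝ) (hh : 0 < h) (hH : h / 2 < H)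
    (hC : 0 < C) (hρ : ρ ≠ 0) :
    ∀ y : ℝ,
      (∫ y' : ℝ,
          C * ρ ^ 2 * K H (z - (y + y') / 2) * K h (y' - y) *
            Real.exp (-(y' - z) ^ 2 / (2 * H * h))) =
        (C * ρ ^ 2 / (Real.sqrt (2 * π) * (H + h / 2))) *
          Real.exp (-(y - z) ^ 2 / (2 * H * h)) := by
  intro y
  have hH0 : 0 < H := lt_trans (by linarith) hH
  have h2Hh : (0:ℝ) < 2 * H + h := by linarith
  have hs0 : (0:ℝ) < Real.sqrt (2 * π) := Real.sqrt_pos.mpr (by positivity)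
  have hs2 : Real.sqrt (2 * π) ^ 2 = 2 * π := Real.sq_sqrt (by positivity)
  set b : ℝ := ((2 * H + h) / (2 * H * h)) ^ 2 / 2 with hb_def
  set m : ℝ := z + (y - z) * (2 * H - h) / (2 * H + h) with hm_def
  have hb : 0 < b := by
    have : (0:ℝ) < (2 * H + h) / (2 * H * h) := by positivity
    positivity
  set c0 : ℝ := C * ρ ^ 2 * (1 / (Real.sqrt (2 * π) * H)) *
      (1 / (Real.sqrt (2 * π) * h)) * Real.exp (-(y - z) ^ 2 / (2 * H * h)) with hc0_def
  have key : ∀ y' : ℝ,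
      C * ρ ^ 2 * K H (z - (y + y') / 2) * K h (y' - y) *
        Real.exp (-(y' - z) ^ 2 / (2 * H * h)) =
      c0 * Real.exp (-b * (y' - m) ^ 2) := by
    intro y'
    unfold K
    have hE : -(z - (y + y') / 2) ^ 2 / (2 * H ^ 2) + -(y' - y) ^ 2 / (2 * h ^ 2) +
        -(y' - z) ^ 2 / (2 * H * h) =
        -(y - z) ^ 2 / (2 * H * h) + -b * (y' - m) ^ 2 := by
      rw [hb_def, hm_def]; field_simp; ring
    have h3 : Real.exp (-(z - (y + y') / 2) ^ 2 / (2 * H ^ 2)) *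
        Real.exp (-(y' - y) ^ 2 / (2 * h ^ 2)) *
        Real.exp (-(y' - z) ^ 2 / (2 * H * h)) =
        Real.exp (-(y - z) ^ 2 / (2 * H * h)) * Real.exp (-b * (y' - m) ^ 2) := by
      rw [← Real.exp_add, ← Real.exp_add, ← Real.exp_add, hE]
    rw [hc0_def]
    linear_combination (C * ρ ^ 2 * (1 / (Real.sqrt (2 * π) * H)) *
      (1 / (Real.sqrt (2 * π) * h))) * h3
  rw [integral_congr_ae (Filter.Eventually.of_forall key)]
  rw [MeasureTheory.integral_const_mul]
  have hshift : (∫ y' : ℝ, Real.exp (-b * (y' - m) ^ 2)) = Real.sqrt (π / b) := by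
    rw [← integral_gaussian b]
    exact MeasureTheory.integral_sub_right_eq_self (fun x => Real.exp (-b * x ^ 2)) m
  rw [hshift]
  have hsqrt : Real.sqrt (π / b) = Real.sqrt (2 * π) * (2 * H * h / (2 * H + h)) := by
    rw [show π / b = (Real.sqrt (2 * π) * (2 * H * h / (2 * H + h))) ^ 2 by
      rw [mul_pow, hs2, hb_def]; field_simp]
    exact Real.sqrt_sq (by positivity)
  rw [hsqrt, hc0_def]
  have h2π : Real.sqrt (2 * π) * Real.sqrt (2 * π) = 2 * π := by
    nlinarith [hs2]
  field_simp
end
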